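/- Define g₁(K) = (2K−1)(1−1/(2K))^K((2K/(2K−1))^K − 1) − ((2K²−3K+1)/(2K²))^K · ((2K−1)K/(K−1)) · (1 − (2(K−1)/(2K−1))^K). Then g₁(K)/(2K) converges to (e^{−1}−e^{−1/2})(e^{−1}−e^{1/2}) as K → ∞. -/

import Mathlib

open Real Filter

/-- g₁ from the finite-range QFI computation. -/
noncomputable def g₁ (K : ℕ) : ℝ :=
  (2 * (K : ℝ) - 1) * (1 - 1 / (2 * (K : ℝ))) ^ K *
      ((2 * (K : ℝ) / (2 * (K : ℝ) - 1)) ^ K - 1) -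
    ((2 * (K : ℝ) ^ 2 - 3 * K + 1) / (2 * (K : ℝ) ^ 2)) ^ K *
      ((2 * (K : ℝ) - 1) * K / ((K : ℝ) - 1)) *
      (1 - (2 * ((K : ℝ) - 1) / (2 * (K : ℝ) - 1)) ^ K)

/-- g₁(K)/(2K) → (e⁻¹ − e^{−1/2})(e⁻¹ − e^{1/2}) as K → ∞. -/
theorem stmt_13 :
    Tendsto (fun K : ℕ => g₁ K / (2 * (K : ℝ)))
      atTop (nhds ((Real.exp (-1) - Real.exp (-(1 / 2))) *
        (Real.exp (-1) - Real.exp (1 / 2)))) := by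
  have hf : Tendsto (fun K : ℕ => (1 + (-(1/2) : ℝ) / K) ^ K) atTop
      (nhds (Real.exp (-(1/2)))) := Real.tendsto_one_add_div_pow_exp _
  have hh : Tendsto (fun K : ℕ => (1 + (-1 : ℝ) / K) ^ K) atTop
      (nhds (Real.exp (-1))) := Real.tendsto_one_add_div_pow_exp _
  have hx0 : Tendsto (fun K : ℕ => 1 / (K : ℝ)) atTop (nhds 0) :=
    tendsto_one_div_atTop_nhds_zero_nat
  have t1 : Tendsto (fun K : ℕ => (2 - 1/(K:ℝ))/2) atTop (nhds ((2-0)/2)) :=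
    (tendsto_const_nhds.sub hx0).div_const 2
  have t3 : Tendsto (fun K : ℕ => (2 - 1/(K:ℝ))/(2 - 2*(1/(K:ℝ)))) atTop
      (nhds ((2-0)/(2-2*0))) :=
    (tendsto_const_nhds.sub hx0).div (tendsto_const_nhds.sub (hx0.const_mul 2))
      (by norm_num)
  have hinv : Tendsto (fun K : ℕ => ((1 + (-(1/2) : ℝ) / K) ^ K)⁻¹) atTop
      (nhds (Real.exp (-(1/2)))⁻¹) := hf.inv₀ (Real.exp_ne_zero _)
  have hdiv : Tendsto (fun K : ℕ => (1 + (-1 : ℝ) / K) ^ K / (1 + (-(1/2) : ℝ) / K) ^ K)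
      atTop (nhds (Real.exp (-1) / Real.exp (-(1/2)))) := hh.div hf (Real.exp_ne_zero _)
  have hV : Tendsto (fun K : ℕ =>
      ((2 - 1/(K:ℝ))/2) * (1 + (-(1/2):ℝ)/K)^K * (((1 + (-(1/2):ℝ)/K)^K)⁻¹ - 1)
        - (1 + (-(1/2):ℝ)/K)^K * (1 + (-1:ℝ)/K)^K * ((2 - 1/(K:ℝ))/(2 - 2*(1/(K:ℝ))))
          * (1 - (1 + (-1:ℝ)/K)^K / (1 + (-(1/2):ℝ)/K)^K)) atTop
      (nhds (((2-0)/2) * Real.exp (-(1/2)) * ((Real.exp (-(1/2)))⁻¹ - 1)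
        - Real.exp (-(1/2)) * Real.exp (-1) * ((2-0)/(2-2*0))
          * (1 - Real.exp (-1) / Real.exp (-(1/2))))) :=
    ((t1.mul hf).mul (hinv.sub tendsto_const_nhds)).sub
      (((hf.mul hh).mul t3).mul (tendsto_const_nhds.sub hdiv))
  have key : ((2-0:ℝ)/2) * Real.exp (-(1/2)) * ((Real.exp (-(1/2)))⁻¹ - 1)
        - Real.exp (-(1/2)) * Real.exp (-1) * ((2-0)/(2-2*0))
          * (1 - Real.exp (-1) / Real.exp (-(1/2)))
      = (Real.exp (-1) - Real.exp (-(1 / 2))) * (Real.exp (-1) - Real.exp (1 / 2)) := by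
    have h2 : Real.exp (-(1/2)) * Real.exp (1/2) = 1 := by
      rw [← Real.exp_add]; norm_num
    have h3 : Real.exp (-(1/2)) * Real.exp (-(1/2)) = Real.exp (-1) := by
      rw [← Real.exp_add]; norm_num
    have h4 : (Real.exp (-(1/2)))⁻¹ = Real.exp (1/2) := by
      rw [← Real.exp_neg]; norm_num
    have h5 : Real.exp (-1) / Real.exp (-(1/2)) = Real.exp (-(1/2)) := by
      rw [eq_comm, eq_div_iff (Real.exp_ne_zero _), h3]
    rw [h4, h5]
    linear_combination (Real.exp (-1) - Real.exp (1/2)) * h3 + Real.exp (-(1/2)) * h2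
  rw [← key]
  refine Tendsto.congr' ?_ hV
  filter_upwards [eventually_ge_atTop 2] with K hK2
  have hx : (2:ℝ) ≤ (K:ℝ) := by exact_mod_cast hK2
  set x := (K:ℝ) with hxdef
  have hx0' : x ≠ 0 := by nlinarith
  have hx1 : x - 1 ≠ 0 := by nlinarith
  have hx2 : 2*x - 1 ≠ 0 := by nlinarith
  have ha : 1 + (-(1/2):ℝ)/x = (2*x-1)/(2*x) := by field_simp; try ring
  have hb : 1 + (-1:ℝ)/x = (x-1)/x := by field_simp; try ring
  have e0 : (1 : ℝ) - 1/(2*x) = (2*x-1)/(2*x) := by field_simp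
  have e1 : 2*x/(2*x-1) = ((2*x-1)/(2*x))⁻¹ := by
    rw [inv_div]
  have e2 : (2*x^2 - 3*x + 1)/(2*x^2) = ((2*x-1)/(2*x)) * ((x-1)/x) := by
    field_simp; try ring
  have e3 : 2*(x-1)/(2*x-1) = ((x-1)/x) / ((2*x-1)/(2*x)) := by
    rw [div_div_div_eq]
    field_simp
  have e1' : (2*x/(2*x-1))^K = (((2*x-1)/(2*x))^K)⁻¹ := by rw [e1, inv_pow]
  have e2' : ((2*x^2 - 3*x + 1)/(2*x^2))^K = ((2*x-1)/(2*x))^K * ((x-1)/x)^K := by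
    rw [e2, mul_pow]
  have e3' : (2*(x-1)/(2*x-1))^K = ((x-1)/x)^K / ((2*x-1)/(2*x))^K := by
    rw [e3, div_pow]
  simp only [g₁, ← hxdef, ha, hb, e0, e1', e2', e3']
  have hA : ((2*x-1)/(2*x))^K ≠ 0 := pow_ne_zero _ (div_ne_zero hx2 (by positivity))
  have main : ∀ A B : ℝ, A ≠ 0 →
      (2 - 1/x)/2 * A * (A⁻¹ - 1) -
          A * B * ((2 - 1/x)/(2 - 2*(1/x))) * (1 - B/A)
        = ((2*x - 1) * A * (A⁻¹ - 1) -
            A * B * ((2*x - 1) * x / (x - 1)) * (1 - B/A)) / (2*x) := by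
    intro A B hA
    have r1 : 2 - 1/x = (2*x-1)/x := by field_simp; try ring
    have r2 : 2 - 2*(1/x) = 2*(x-1)/x := by field_simp; try ring
    rw [r1, r2]
    field_simp
  exact main _ _ hA
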